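/- Let a, b be odd positive integers and r ≥ 1 a real number with (9/2)·b·r·log(4r+3) ≤ a and b/(2(a+b)) ≤ 1/20. Let Q(X) = (X+2r+1)^b (X-1)^{a+b} - (X-2r-1)^b (X+1)^{a+b}. Then Q(2r+1+br/(a+b)) < 0. -/

import Mathlib

open Real

private lemma log_lin (x y : ℝ) (hy : 0 < y) (hxy : y ≤ x) :
    Real.log x ≤ Real.log y + (x - y)/y := by
  have hx : 0 < x := lt_of_lt_of_le hy hxy
  have h := Real.log_le_sub_one_of_pos (show 0 < x/y by positivity)
  rw [Real.log_div hx.ne' hy.ne'] at h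
  have h2 : x/y - 1 = (x-y)/y := by field_simp
  rw [h2] at h
  linarith

private lemma exp2_lb : (7.389:ℝ) < Real.exp 2 := by
  have e1 := Real.exp_one_gt_d9
  have h : Real.exp 2 = Real.exp 1 * Real.exp 1 := by
    rw [← Real.exp_add]; norm_num
  nlinarith

private lemma exp2_ub : Real.exp 2 < 7.3890561 := by
  have e2 := Real.exp_one_lt_d9
  have e0 : (0:ℝ) < Real.exp 1 := Real.exp_pos 1
  have h : Real.exp 2 = Real.exp 1 * Real.exp 1 := by
    rw [← Real.exp_add]; norm_num
  nlinarith

private lemma log7_lb : (1.9444:ℝ) ≤ Real.log 7 := by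
  have h := Real.log_le_sub_one_of_pos (show (0:ℝ) < Real.exp 2 / 7 by positivity)
  rw [Real.log_div (Real.exp_ne_zero 2) (by norm_num), Real.log_exp] at h
  have hu := exp2_ub
  linarith

private lemma log7_ub : Real.log 7 ≤ 1.9475 := by
  have h := Real.log_le_sub_one_of_pos (show (0:ℝ) < 7 / Real.exp 2 by positivity)
  rw [Real.log_div (by norm_num) (Real.exp_ne_zero 2), Real.log_exp] at h
  have hl := exp2_lb
  have hp : (0:ℝ) < Real.exp 2 := Real.exp_pos 2
  have : 7 / Real.exp 2 ≤ 7 / 7.389 := by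
    apply div_le_div_of_nonneg_left (by norm_num) (by norm_num) hl.le
  linarith

private lemma key10 {L : ℝ} (hL : Real.log 7 ≤ L) :
    Real.log (4.5*L+1) < 49*L/41 := by
  have hl := log7_lb
  have hu := log7_ub
  set l := Real.log 7 with hldef
  -- base value bound
  have ht0 : (0:ℝ) < (4.5*l+1)/7 := by nlinarith
  have hsq : Real.sqrt ((4.5*l+1)/7) ≤ 1.1811 := by
    rw [show (1.1811:ℝ) = Real.sqrt (1.1811^2) from (Real.sqrt_sq (by norm_num)).symm]
    apply Real.sqrt_le_sqrt
    nlinarith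
  have hlogsqrt := Real.log_sqrt ht0.le
  have hsqpos : 0 < Real.sqrt ((4.5*l+1)/7) := Real.sqrt_pos.mpr ht0
  have h1 := Real.log_le_sub_one_of_pos hsqpos
  have hlogt : Real.log ((4.5*l+1)/7) ≤ 0.3622 := by nlinarith
  have hsplit : Real.log ((4.5*l+1)/7) = Real.log (4.5*l+1) - l := by
    rw [Real.log_div (by nlinarith) (by norm_num)]
  have hbase : Real.log (4.5*l+1) ≤ l + 0.3622 := by linarith [hsplit ▸ hlogt]
  -- linear step
  have hstep := log_lin (4.5*L+1) (4.5*l+1) (by nlinarith) (by nlinarith)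
  have hden : (4.5*l+1) ≥ 9.7498 := by nlinarith
  have hfrac : (4.5*L+1 - (4.5*l+1))/(4.5*l+1) ≤ 0.47*(L-l) := by
    rw [show 4.5*L+1 - (4.5*l+1) = 4.5*(L-l) by ring]
    rw [div_le_iff₀ (by nlinarith)]
    nlinarith [mul_nonneg (sub_nonneg.mpr hL) (show (0:ℝ) ≤ 0.47*(4.5*l+1) - 4.5 by nlinarith)]
  have hlhs : Real.log (4.5*L+1) ≤ l + 0.3622 + 0.47*(L-l) := by linarith
  linarith

set_option maxHeartbeats 2000000 in
theorem stmt_14 (a b : ℕ) (ha : Odd a) (hb : Odd b) (ha0 : 0 < a) (hb0 : 0 < b)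
    (r : ℝ) (hr : 1 ≤ r)
    (h1 : (9/2) * (b:ℝ) * r * Real.log (4*r+3) ≤ (a:ℝ))
    (h2 : (b:ℝ) / (2*((a:ℝ)+(b:ℝ))) ≤ 1/20) :
    (2*r+1 + (b:ℝ)*r/((a:ℝ)+(b:ℝ)) + (2*r+1))^b *
        (2*r+1 + (b:ℝ)*r/((a:ℝ)+(b:ℝ)) - 1)^(a+b)
      - (2*r+1 + (b:ℝ)*r/((a:ℝ)+(b:ℝ)) - (2*r+1))^b *
        (2*r+1 + (b:ℝ)*r/((a:ℝ)+(b:ℝ)) + 1)^(a+b) < 0 := by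
  have hb1 : (1:ℝ) ≤ (b:ℝ) := by exact_mod_cast hb0
  have ha1 : (1:ℝ) ≤ (a:ℝ) := by exact_mod_cast ha0
  have hr0 : (0:ℝ) < r := lt_of_lt_of_le one_pos hr
  set N : ℝ := (a:ℝ) + (b:ℝ) with hN
  clear_value N
  have hN0 : (0:ℝ) < N := by rw [hN]; linarith
  set ε : ℝ := (b:ℝ)*r/N with hε
  clear_value ε
  have hb0' : (0:ℝ) < (b:ℝ) := by linarith
  have hε0 : (0:ℝ) < ε := by rw [hε]; positivity
  have hbN : (b:ℝ) ≤ N/10 := by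
    rw [div_le_div_iff₀ (by linarith : (0:ℝ) < 2*N) (by norm_num : (0:ℝ) < 20)] at h2
    linarith
  have hεr : ε ≤ r/10 := by
    rw [hε, div_le_div_iff₀ hN0 (by norm_num : (0:ℝ)<10)]
    nlinarith
  set L := Real.log (4*r+3) with hLdef
  clear_value L
  have hlog7L : Real.log 7 ≤ L := by
    rw [hLdef]; exact Real.log_le_log (by norm_num) (by linarith)
  have hL194 : (1.9444:ℝ) ≤ L := le_trans log7_lb hlog7L
  set s : ℝ := N/(b:ℝ) with hs
  clear_value s
  have hs0 : 4.5*r*L + 1 ≤ s := by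
    rw [hs, le_div_iff₀ hb0']
    nlinarith
  have s0pos : (0:ℝ) < 4.5*r*L+1 := by nlinarith
  have hDeq : (4*r+2+ε)/ε = (4*r+2)/r * s + 1 := by
    rw [hε, hs]; field_simp
  set A := (4*r+2)/r with hA
  clear_value A
  have hA0 : (0:ℝ) < A := by rw [hA]; positivity
  have hAs0pos : (0:ℝ) < A*(4.5*r*L+1)+1 := by positivity
  have hss0 : A*(4.5*r*L+1)+1 ≤ A*s+1 := by nlinarith
  have hc1 := log_lin (A*s+1) (A*(4.5*r*L+1)+1) hAs0pos hss0
  have hAq : A/(A*(4.5*r*L+1)+1) ≤ 1/(4.5*r*L+1) := by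
    rw [div_le_div_iff₀ hAs0pos s0pos]
    nlinarith
  have hfrac : (A*s+1 - (A*(4.5*r*L+1)+1))/(A*(4.5*r*L+1)+1) ≤ (s - (4.5*r*L+1))/(4.5*r*L+1) := by
    rw [show A*s+1 - (A*(4.5*r*L+1)+1) = (s - (4.5*r*L+1)) * (A/(A*(4.5*r*L+1)+1)) * (A*(4.5*r*L+1)+1) by field_simp; ring]
    rw [mul_div_assoc, div_self hAs0pos.ne', mul_one,
      show (s - (4.5*r*L+1))/(4.5*r*L+1) = (s - (4.5*r*L+1)) * (1/(4.5*r*L+1)) by ring]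
    exact mul_le_mul_of_nonneg_left hAq (by linarith)
  have harg : A*(4.5*r*L+1)+1 ≤ (4*r+3)*(4.5*L+1) := by
    rw [hA, div_mul_eq_mul_div, div_add' _ _ _ hr0.ne', div_le_iff₀ hr0]
    nlinarith
  have hc2 : Real.log (A*(4.5*r*L+1)+1) ≤ L + Real.log (4.5*L+1) := by
    calc Real.log (A*(4.5*r*L+1)+1) ≤ Real.log ((4*r+3)*(4.5*L+1)) :=
          Real.log_le_log hAs0pos harg
      _ = L + Real.log (4.5*L+1) := by
          rw [Real.log_mul (by linarith : (4*r+3:ℝ) ≠ 0) (by nlinarith : (4.5*L+1:ℝ) ≠ 0), ← hLdef]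
  have hc3 := key10 hlog7L
  have e1 : 90*L/41 ≤ 20*(4.5*r*L+1)/(41*r) := by
    rw [div_le_div_iff₀ (by norm_num : (0:ℝ)<41) (by positivity : (0:ℝ)<41*r)]
    nlinarith
  have e2 : (s - (4.5*r*L+1))/(4.5*r*L+1) ≤ 20*(s - (4.5*r*L+1))/(41*r) := by
    rw [div_le_div_iff₀ s0pos (by positivity : (0:ℝ)<41*r)]
    nlinarith [mul_nonneg (show (0:ℝ) ≤ s - (4.5*r*L+1) by linarith)
      (show (0:ℝ) ≤ 20*(4.5*r*L+1) - 41*r by nlinarith)]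
  have e3 : 20*(4.5*r*L+1)/(41*r) + 20*(s - (4.5*r*L+1))/(41*r) = 20*s/(41*r) := by
    rw [← add_div, show 20*(4.5*r*L+1) + 20*(s - (4.5*r*L+1)) = 20*s by ring]
  have hlogD : Real.log ((4*r+2+ε)/ε) < 20*s/(41*r) := by
    rw [hDeq]
    calc Real.log (A*s+1)
        ≤ Real.log (A*(4.5*r*L+1)+1) + (A*s+1 - (A*(4.5*r*L+1)+1))/(A*(4.5*r*L+1)+1) := hc1
      _ ≤ (L + Real.log (4.5*L+1)) + (s - (4.5*r*L+1))/(4.5*r*L+1) := by linarith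
      _ < (L + 49*L/41) + (s - (4.5*r*L+1))/(4.5*r*L+1) := by linarith
      _ = 90*L/41 + (s - (4.5*r*L+1))/(4.5*r*L+1) := by ring
      _ ≤ 20*(4.5*r*L+1)/(41*r) + 20*(s - (4.5*r*L+1))/(41*r) := by linarith
      _ = 20*s/(41*r) := e3
  have hx4 : (0:ℝ) < 4*r+2+ε := by linarith
  have hx2 : (0:ℝ) < 2*r+ε := by linarith
  have hx3 : (0:ℝ) < 2*r+2+ε := by linarith
  have hK : (b:ℝ) * Real.log ((4*r+2+ε)/ε) < N * (2/(2*r+2+ε)) := by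
    have hbs : (b:ℝ) * (20*s/(41*r)) = N * (20/(41*r)) := by
      rw [hs]; field_simp
    have hcmp : 20/(41*r) ≤ 2/(2*r+2+ε) := by
      rw [div_le_div_iff₀ (by positivity : (0:ℝ)<41*r) hx3]
      nlinarith
    calc (b:ℝ) * Real.log ((4*r+2+ε)/ε) < (b:ℝ) * (20*s/(41*r)) := by
          apply mul_lt_mul_of_pos_left hlogD hb0'
      _ = N * (20/(41*r)) := hbs
      _ ≤ N * (2/(2*r+2+ε)) := mul_le_mul_of_nonneg_left hcmp hN0.le
  -- now the product comparison
  rw [show 2*r+1+ε+(2*r+1) = 4*r+2+ε from by ring,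
    show 2*r+1+ε-1 = 2*r+ε from by ring,
    show 2*r+1+ε-(2*r+1) = ε from by ring,
    show 2*r+1+ε+1 = 2*r+2+ε from by ring, sub_neg]
  have p1 : (4*r+2+ε)^b*(2*r+ε)^(a+b)
      = Real.exp ((b:ℝ)*Real.log (4*r+2+ε) + ((a+b:ℕ):ℝ)*Real.log (2*r+ε)) := by
    rw [Real.exp_add, ← Real.log_pow, ← Real.log_pow, Real.exp_log (pow_pos hx4 b),
      Real.exp_log (pow_pos hx2 (a+b))]
  have p2 : ε^b*(2*r+2+ε)^(a+b)
      = Real.exp ((b:ℝ)*Real.log ε + ((a+b:ℕ):ℝ)*Real.log (2*r+2+ε)) := by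
    rw [Real.exp_add, ← Real.log_pow, ← Real.log_pow, Real.exp_log (pow_pos hε0 b),
      Real.exp_log (pow_pos hx3 (a+b))]
  rw [p1, p2]
  apply Real.exp_lt_exp.mpr
  have hcast : ((a+b:ℕ):ℝ) = N := by rw [hN]; push_cast; ring
  rw [hcast]
  have hRlog : 2/(2*r+2+ε) ≤ Real.log (2*r+2+ε) - Real.log (2*r+ε) := by
    have h := Real.log_le_sub_one_of_pos (show (0:ℝ) < (2*r+ε)/(2*r+2+ε) by positivity)
    rw [Real.log_div hx2.ne' hx3.ne'] at h
    have heq : (2*r+ε)/(2*r+2+ε) - 1 = -(2/(2*r+2+ε)) := by field_simp; ring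
    rw [heq] at h
    linarith
  rw [Real.log_div hx4.ne' hε0.ne', mul_sub] at hK
  have hfin : N * (2/(2*r+2+ε)) ≤ N * (Real.log (2*r+2+ε) - Real.log (2*r+ε)) :=
    mul_le_mul_of_nonneg_left hRlog hN0.le
  rw [mul_sub] at hfin
  linarith
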